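/- arXiv:2409.03146 — 2 statements merged into one kernel-verified Lean document; each statement's English description precedes it below -/
import Mathlib

section
/- Let $V$ be a real inner product space, let $R \geq 0$, and let $A, B \in V$ with $\|A\| > R$ and $\|B\| > R$. Define the line-of-sight indicator $q = \sqrt{\|A\|^2 - R^2} + \sqrt{\|B\|^2 - R^2} - \|A - B\|$. Then $q > 0$ if and only if every point of the closed segment from $A$ to $B$ lies strictly outside the closed ball of radius $R$ centered at the origin, i.e., $\|(1-t)A + tB\| > R$ for all $t \in [0,1]$. -/
/-- Line-of-sight indicator positivity characterizes the segment from `A` to `B`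
staying strictly outside the closed ball of radius `R` about the origin. -/
theorem los_indicator_pos_iff_segment_outside
    (V : Type*) [NormedAddCommGroup V] [InnerProductSpace ℝ V]
    (R : ℝ) (hR : 0 ≤ R) (A B : V) (hA : R < ‖A‖) (hB : R < ‖B‖) :
    0 < Real.sqrt (‖A‖ ^ 2 - R ^ 2) + Real.sqrt (‖B‖ ^ 2 - R ^ 2) - ‖A - B‖ ↔
      ∀ t : ℝ, t ∈ Set.Icc (0 : ℝ) 1 → R < ‖(1 - t) • A + t • B‖ := by
  set p : ℝ := inner ℝ A (A - B) with hp
  set d : ℝ := ‖A - B‖ with hd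
  have key : ∀ t : ℝ, ‖(1 - t) • A + t • B‖ ^ 2
      = ‖A‖ ^ 2 - 2 * t * p + t ^ 2 * d ^ 2 := by
    intro t
    have h1 : (1 - t) • A + t • B = A - t • (A - B) := by
      rw [smul_sub, sub_smul]; module
    rw [h1, norm_sub_sq_real, real_inner_smul_right, norm_smul, Real.norm_eq_abs,
      mul_pow, sq_abs]
    ring
  have hd0 : 0 ≤ d := norm_nonneg _
  have hb : ‖B‖ ^ 2 = ‖A‖ ^ 2 - 2 * p + d ^ 2 := by
    have := key 1
    simpa using this
  set α : ℝ := Real.sqrt (‖A‖ ^ 2 - R ^ 2) with hα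
  set β : ℝ := Real.sqrt (‖B‖ ^ 2 - R ^ 2) with hβ
  have hA2 : R ^ 2 < ‖A‖ ^ 2 := by
    have := pow_lt_pow_left₀ hA hR two_ne_zero; simpa using this
  have hB2 : R ^ 2 < ‖B‖ ^ 2 := by
    have := pow_lt_pow_left₀ hB hR two_ne_zero; simpa using this
  have hα2 : α ^ 2 = ‖A‖ ^ 2 - R ^ 2 := Real.sq_sqrt (by linarith)
  have hβ2 : β ^ 2 = ‖B‖ ^ 2 - R ^ 2 := Real.sq_sqrt (by linarith)
  have hα0 : 0 < α := Real.sqrt_pos.mpr (by linarith)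
  have hβ0 : 0 < β := Real.sqrt_pos.mpr (by linarith)
  constructor
  · -- q > 0 → segment outside
    intro hq t ht
    by_contra hcon
    push_neg at hcon
    have hg : ‖A‖ ^ 2 - 2 * t * p + t ^ 2 * d ^ 2 ≤ R ^ 2 := by
      rw [← key t]
      have := pow_le_pow_left₀ (norm_nonneg ((1 - t) • A + t • B)) hcon 2
      simpa using this
    obtain ⟨ht0, ht1⟩ := ht
    -- p > 0
    have hp0 : 0 < p := by nlinarith
    -- p < d^2
    have hpd : p < d ^ 2 := by nlinarith [sq_nonneg (1 - t)]
    have hdpos : 0 < d := by nlinarith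
    -- minimum value bound: a² - p²/d² ≤ R²
    have hmin : (‖A‖ ^ 2 - R ^ 2) * d ^ 2 ≤ p ^ 2 := by
      nlinarith [sq_nonneg (t * d ^ 2 - p)]
    have hαd : α * d ≤ p := by
      have h1 : (α * d) ^ 2 ≤ p ^ 2 := by
        calc (α * d) ^ 2 = (‖A‖ ^ 2 - R ^ 2) * d ^ 2 := by rw [mul_pow, hα2]
          _ ≤ p ^ 2 := hmin
      exact (pow_le_pow_iff_left₀ (by positivity) hp0.le two_ne_zero).mp h1
    have hαltd : α < d := by
      have h2 : α * d < d * d := by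
        have h := hαd.trans_lt hpd
        rwa [pow_two] at h
      exact lt_of_mul_lt_mul_right h2 hd0
    have hβle : β ≤ d - α := by
      have h1 : β ^ 2 ≤ (d - α) ^ 2 := by
        have e : (d - α) ^ 2 = d ^ 2 - 2 * (α * d) + α ^ 2 := by ring
        rw [e, hβ2]
        linarith
      exact (pow_le_pow_iff_left₀ hβ0.le (by linarith) two_ne_zero).mp h1
    linarith
  · -- segment outside → q > 0
    intro hseg
    by_contra hq
    push_neg at hq
    have hsum : α + β ≤ d := by linarith
    have hdpos : 0 < d := by linarith
    have hαltd : α < d := by linarith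
    have hβle : β ≤ d - α := by linarith
    have h1 : β ^ 2 ≤ (d - α) ^ 2 := pow_le_pow_left₀ hβ0.le hβle 2
    have hpαd : α * d ≤ p := by
      have e : (d - α) ^ 2 = d ^ 2 - 2 * (α * d) + α ^ 2 := by ring
      rw [e, hβ2] at h1
      linarith
    -- witness t = α / d
    have ht : α / d ∈ Set.Icc (0 : ℝ) 1 := by
      constructor
      · positivity
      · rw [div_le_one hdpos]; linarith
    have := hseg (α / d) ht
    have hg : R ^ 2 < ‖A‖ ^ 2 - 2 * (α / d) * p + (α / d) ^ 2 * d ^ 2 := by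
      rw [← key (α / d)]
      have := pow_lt_pow_left₀ this hR two_ne_zero
      simpa using this
    have hsq : (α / d) ^ 2 * d ^ 2 = α ^ 2 := by
      field_simp
    have hprod : α ^ 2 ≤ (α / d) * p := by
      have h2 : (α / d) * (α * d) ≤ (α / d) * p :=
        mul_le_mul_of_nonneg_left hpαd (by positivity)
      calc α ^ 2 = (α / d) * (α * d) := by field_simp
        _ ≤ (α / d) * p := h2
    rw [hsq] at hg
    linarith
end

section
/- Let $V$ be a real inner product space, let $R > 0$, and let $A, B \in V$ with $A \neq B$, $\|A\| > R$ and $\|B\| > R$. If $\|A - B\| > \sqrt{\|A\|^2 - R^2} + \sqrt{\|B\|^2 - R^2}$ (i.e., the line-of-sight indicator $q$ is negative), then some point of the segment from $A$ to $B$ lies in the open ball of radius $R$ about the origin, and the set $\{t \in [0,1] : \|(1-t)A + tB\| = R\}$ has exactly two elements; that is, the segment intersects the sphere of radius $R$ in exactly two points. -/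
private lemma aux_tangent (d α β : ℝ) (hα : 0 < α) (hβ : 0 < β) (h : α + β < d) :
    β ^ 2 - α ^ 2 - d ^ 2 + 2 * d * α < 0 := by
  nlinarith [mul_pos hα hβ, sq_nonneg (d - α - β)]

private lemma aux_tangent' (d α β : ℝ) (hα : 0 < α) (hβ : 0 < β) (h : α + β < d) :
    β ^ 2 - α ^ 2 - d ^ 2 - 2 * d * α < 0 := by
  nlinarith [mul_pos hα hβ, sq_nonneg (d - α - β)]

private lemma aux_prod_pos (c x : ℝ) (h1 : c + x < 0) (h2 : c - x < 0) :
    0 < c ^ 2 - x ^ 2 := by nlinarith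

private lemma aux_sqrt_lt (s c : ℝ) (hs : 0 ≤ s) (hc : 0 < c) (h : s ^ 2 < c ^ 2) :
    s < c := by nlinarith

private lemma aux_norm_eq (x R : ℝ) (hx : 0 ≤ x) (hR : 0 < R) (h : x ^ 2 = R ^ 2) :
    x = R := by nlinarith

private lemma aux_norm_lt (x R : ℝ) (hx : 0 ≤ x) (hR : 0 < R) (h : x ^ 2 < R ^ 2) :
    x < R := by nlinarith

set_option maxHeartbeats 1000000 in
/-- If the line-of-sight indicator is negative, the segment from `A` to `B` enters the
open ball of radius `R` about the origin, and it meets the sphere of radius `R` in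
exactly two points. -/
theorem los_indicator_neg_two_sphere_points
    (V : Type*) [NormedAddCommGroup V] [InnerProductSpace ℝ V]
    (R : ℝ) (hR : 0 < R) (A B : V) (hAB : A ≠ B) (hA : R < ‖A‖) (hB : R < ‖B‖)
    (hq : Real.sqrt (‖A‖ ^ 2 - R ^ 2) + Real.sqrt (‖B‖ ^ 2 - R ^ 2) < ‖A - B‖) :
    (∃ t ∈ Set.Icc (0 : ℝ) 1, ‖(1 - t) • A + t • B‖ < R) ∧
      {t : ℝ | t ∈ Set.Icc (0 : ℝ) 1 ∧ ‖(1 - t) • A + t • B‖ = R}.ncard = 2 := by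
  set a := ‖A‖ with ha
  set b := ‖B‖ with hb
  set d := ‖A - B‖ with hd
  set α := Real.sqrt (a ^ 2 - R ^ 2) with hα
  set β := Real.sqrt (b ^ 2 - R ^ 2) with hβ
  have hd0 : 0 < d := by
    rw [hd, norm_pos_iff, sub_ne_zero]; exact hAB
  have hα0 : 0 < α := Real.sqrt_pos.mpr (by nlinarith)
  have hβ0 : 0 < β := Real.sqrt_pos.mpr (by nlinarith)
  have hα2 : α ^ 2 = a ^ 2 - R ^ 2 := Real.sq_sqrt (by nlinarith)
  have hβ2 : β ^ 2 = b ^ 2 - R ^ 2 := Real.sq_sqrt (by nlinarith)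
  set c : ℝ := b ^ 2 - a ^ 2 - d ^ 2 with hc
  -- expansion of the norm
  have hinner : (inner ℝ A (B - A) : ℝ) = c / 2 := by
    have h1 : ‖A - B‖ ^ 2 = ‖A‖ ^ 2 - 2 * inner ℝ A B + ‖B‖ ^ 2 := by
      rw [norm_sub_sq_real]
    rw [inner_sub_right, real_inner_self_eq_norm_sq]
    simp only [hc]
    linarith
  have hexpand : ∀ t : ℝ, ‖(1 - t) • A + t • B‖ ^ 2 = d ^ 2 * t ^ 2 + c * t + a ^ 2 := by
    intro t
    have hv : (1 - t) • A + t • B = A + t • (B - A) := by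
      rw [smul_sub, sub_smul, one_smul]; abel
    rw [hv, norm_add_sq_real, real_inner_smul_right, hinner, norm_smul]
    have hBA : ‖B - A‖ = d := by rw [hd, norm_sub_rev]
    rw [mul_pow, hBA, Real.norm_eq_abs, sq_abs]
    ring
  -- key inequalities
  have h1 : c + 2 * d * α < 0 := by
    have := aux_tangent d α β hα0 hβ0 hq
    linarith [hα2, hβ2]
  have h2 : c - 2 * d * α < 0 := by
    have := aux_tangent' d α β hα0 hβ0 hq
    linarith [hα2, hβ2]
  set Δ : ℝ := c ^ 2 - 4 * d ^ 2 * α ^ 2 with hΔdef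
  have hΔ : 0 < Δ := by
    have h5 := aux_prod_pos c (2 * d * α) h1 h2
    have e5 : (2 * d * α) ^ 2 = 4 * d ^ 2 * α ^ 2 := by ring
    rw [hΔdef, ← e5]; exact h5
  set s : ℝ := Real.sqrt Δ with hs
  have hs2 : s ^ 2 = Δ := Real.sq_sqrt hΔ.le
  have hs2' : s ^ 2 = c ^ 2 - 4 * d ^ 2 * α ^ 2 := by rw [hs2]
  have hs0 : 0 < s := Real.sqrt_pos.mpr hΔ
  set t1 : ℝ := (-c - s) / (2 * d ^ 2) with ht1
  set t2 : ℝ := (-c + s) / (2 * d ^ 2) with ht2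
  have hd2 : (0:ℝ) < 2 * d ^ 2 := by positivity
  have hsum : d ^ 2 * (t1 + t2) = -c := by
    rw [ht1, ht2]; field_simp; ring
  have hprod : d ^ 2 * (t1 * t2) = a ^ 2 - R ^ 2 := by
    rw [ht1, ht2]
    have hd4 : d ^ 2 * (2 * d ^ 2 * (2 * d ^ 2)) ≠ 0 := by positivity
    field_simp
    linear_combination (-1 : ℝ) * hs2' + (4*d^2) * hα2
  have ht12 : t1 < t2 := by
    rw [ht1, ht2, div_lt_div_iff₀ hd2 hd2]
    exact mul_lt_mul_of_pos_right (by linarith) hd2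
  have hfact : ∀ t : ℝ, d ^ 2 * t ^ 2 + c * t + (a ^ 2 - R ^ 2) = d ^ 2 * (t - t1) * (t - t2) := by
    intro t
    have e1 : d ^ 2 * (t - t1) * (t - t2)
        = d ^ 2 * t ^ 2 - (d ^ 2 * (t1 + t2)) * t + d ^ 2 * (t1 * t2) := by ring
    rw [e1, hsum, hprod]; ring
  have hcneg : 0 < -c := by
    have := aux_tangent d α β hα0 hβ0 hq
    have hdα := mul_pos hd0 hα0
    linarith [hα2, hβ2]
  have h4 : 0 < 2 * d ^ 2 + c := by
    have := aux_tangent d β α hβ0 hα0 (by linarith)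
    have hdβ := mul_pos hd0 hβ0
    linarith [hα2, hβ2]
  have hslt : s < -c := by
    refine aux_sqrt_lt s (-c) hs0.le hcneg ?_
    have hpos : (0:ℝ) < 4 * d ^ 2 * α ^ 2 := by positivity
    have e6 : (-c) ^ 2 = c ^ 2 := by ring
    rw [e6]; linarith [hs2']
  have hslt2 : s < 2 * d ^ 2 + c := by
    refine aux_sqrt_lt s (2 * d ^ 2 + c) hs0.le h4 ?_
    have e7 : (2 * d ^ 2 + c) ^ 2 - s ^ 2 = 4 * d ^ 2 * β ^ 2 := by
      linear_combination (-1 : ℝ) * hs2' - (4*d^2) * hβ2 + (4*d^2) * hα2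
    have hpos : (0:ℝ) < 4 * d ^ 2 * β ^ 2 := by positivity
    linarith
  have ht1pos : 0 < t1 := div_pos (by linarith) hd2
  have ht2lt : t2 < 1 := by
    rw [ht2, div_lt_one hd2]; linarith
  have ht1mem : t1 ∈ Set.Icc (0:ℝ) 1 := ⟨ht1pos.le, by linarith⟩
  have ht2mem : t2 ∈ Set.Icc (0:ℝ) 1 := ⟨by linarith, ht2lt.le⟩
  have hkey : ∀ t : ℝ, ‖(1 - t) • A + t • B‖ = R ↔ d ^ 2 * (t - t1) * (t - t2) = 0 := by
    intro t
    have h := hexpand t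
    constructor
    · intro ht
      rw [← hfact]
      have hsq : ‖(1 - t) • A + t • B‖ ^ 2 = R ^ 2 := by rw [ht]
      linarith [hsq.symm.trans h]
    · intro ht
      have hsq : ‖(1 - t) • A + t • B‖ ^ 2 = R ^ 2 := by
        have hf := hfact t
        linarith [h]
      exact aux_norm_eq _ R (norm_nonneg _) hR hsq
  constructor
  · refine ⟨α / d, ⟨by positivity, (div_le_one hd0).mpr (by linarith)⟩, ?_⟩
    have h := hexpand (α / d)
    have e2 : d ^ 2 * (α / d) ^ 2 = α ^ 2 := by
      field_simp
    have e3 : c * (α / d) < -2 * α ^ 2 := by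
      have := mul_lt_mul_of_pos_right (show c < -2 * d * α by linarith)
        (div_pos hα0 hd0)
      calc c * (α / d) < -2 * d * α * (α / d) := this
        _ = -2 * α ^ 2 := by field_simp
    have hlt : ‖(1 - α / d) • A + (α / d) • B‖ ^ 2 < R ^ 2 := by
      rw [h]; linarith [e2, e3, hα2]
    exact aux_norm_lt _ R (norm_nonneg _) hR hlt
  · have hSeq : {t : ℝ | t ∈ Set.Icc (0:ℝ) 1 ∧ ‖(1 - t) • A + t • B‖ = R} = {t1, t2} := by
      ext t
      simp only [Set.mem_setOf_eq, Set.mem_insert_iff, Set.mem_singleton_iff]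
      constructor
      · rintro ⟨hmem, hn⟩
        have h0 := (hkey t).mp hn
        have hd2' : (d : ℝ) ^ 2 ≠ 0 := by positivity
        rcases mul_eq_zero.mp h0 with h' | h'
        · rcases mul_eq_zero.mp h' with h'' | h''
          · exact absurd h'' hd2'
          · exact Or.inl (by linarith [sub_eq_zero.mp h''])
        · exact Or.inr (by linarith [sub_eq_zero.mp h'])
      · rintro (rfl | rfl)
        · exact ⟨ht1mem, (hkey t1).mpr (by ring)⟩
        · exact ⟨ht2mem, (hkey t2).mpr (by ring)⟩
    rw [hSeq]
    exact Set.ncard_pair (ne_of_lt ht12)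
end
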